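/- Let Σ_B be a fan in ℝ^k and Σ_F a fan in ℝ^n, and let Φ : |Σ_B| → ℝ^n be continuous and linear on each cone of Σ_B. Then the collection Σ_B ⋉_Φ Σ_F := {σ̃ + τ : σ ∈ Σ_B, τ ∈ Σ_F}, where σ̃ = {(x, Φ(x)) : x ∈ σ} and τ is embedded as {0} × τ, is a fan in ℝ^k × ℝ^n: every face of a cone in the collection belongs to the collection, and any two cones in the collection intersect in a common face. -/

import Mathlib

open scoped Pointwise

noncomputable section

def IsPolyCone {E : Type*} [AddCommMonoid E] [Module ℝ E] (C : Set E) : Prop :=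
  ∃ s : Finset E,
    C = (Submodule.span {c : ℝ // 0 ≤ c} (s : Set E) : Submodule {c : ℝ // 0 ≤ c} E)

def posSpan {E : Type*} [AddCommMonoid E] [Module ℝ E] (s : Set E) : Set E :=
  (Submodule.span {c : ℝ // 0 ≤ c} s : Submodule {c : ℝ // 0 ≤ c} E)

def graphOver {k n : ℕ} (Φ : (Fin k → ℝ) → (Fin n → ℝ)) (σ : Set (Fin k → ℝ)) :
    Set ((Fin k → ℝ) × (Fin n → ℝ)) :=
  (fun x => (x, Φ x)) '' σ

def twistedCone {k n : ℕ} (Φ : (Fin k → ℝ) → (Fin n → ℝ)) (σ : Set (Fin k → ℝ))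
    (τ : Set (Fin n → ℝ)) : Set ((Fin k → ℝ) × (Fin n → ℝ)) :=
  graphOver Φ σ + ({0} : Set (Fin k → ℝ)) ×ˢ τ

def IsFaceOf {E : Type*} [AddCommMonoid E] [Module ℝ E] (F C : Set E) : Prop :=
  F = C ∨ ∃ ℓ : E →ₗ[ℝ] ℝ, (∀ x ∈ C, ℓ x ≤ 0) ∧ F = {x ∈ C | ℓ x = 0}

def IsFan {E : Type*} [AddCommGroup E] [Module ℝ E] (F : Set (Set E)) : Prop :=
  F.Finite ∧
  (∀ C ∈ F, IsPolyCone C ∧ C ∩ (-C) = {0}) ∧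
  (∀ C ∈ F, ∀ G : Set E, IsFaceOf G C → G ∈ F) ∧
  (∀ C ∈ F, ∀ D ∈ F, IsFaceOf (C ∩ D) C ∧ IsFaceOf (C ∩ D) D)

def IsPLOn {k n : ℕ} (Φ : (Fin k → ℝ) → (Fin n → ℝ)) (F : Set (Set (Fin k → ℝ))) : Prop :=
  ContinuousOn Φ (⋃₀ F) ∧
  ∀ σ ∈ F, ∃ ℓ : (Fin k → ℝ) →ₗ[ℝ] (Fin n → ℝ), ∀ x ∈ σ, Φ x = ℓ x

def twistedFan {k n : ℕ} (Φ : (Fin k → ℝ) → (Fin n → ℝ)) (SB : Set (Set (Fin k → ℝ)))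
    (SF : Set (Set (Fin n → ℝ))) : Set (Set ((Fin k → ℝ) × (Fin n → ℝ))) :=
  {C | ∃ σ ∈ SB, ∃ τ ∈ SF, C = twistedCone Φ σ τ}

/-! ### Auxiliary lemmas -/

lemma mem_twistedCone {k n : ℕ} (Φ : (Fin k → ℝ) → (Fin n → ℝ))
    (σ : Set (Fin k → ℝ)) (τ : Set (Fin n → ℝ)) (p : (Fin k → ℝ) × (Fin n → ℝ)) :
    p ∈ twistedCone Φ σ τ ↔ p.1 ∈ σ ∧ p.2 - Φ p.1 ∈ τ := by
  rw [twistedCone, Set.mem_add]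
  constructor
  · rintro ⟨a, ⟨x, hx, rfl⟩, b, hb, hp⟩
    rcases Set.mem_prod.1 hb with ⟨hb1, hb2⟩
    simp only [Set.mem_singleton_iff] at hb1
    subst hp
    simp [hb1, hx, hb2]
  · rintro ⟨h1, h2⟩
    refine ⟨(p.1, Φ p.1), ⟨p.1, h1, rfl⟩, (0, p.2 - Φ p.1), Set.mk_mem_prod rfl h2, ?_⟩
    ext i <;> simp

lemma IsPolyCone.zero_mem' {E : Type*} [AddCommMonoid E] [Module ℝ E] {C : Set E}
    (h : IsPolyCone C) : (0 : E) ∈ C := by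
  obtain ⟨s, rfl⟩ := h
  exact Submodule.zero_mem _

lemma IsFaceOf.exists_rep {E : Type*} [AddCommMonoid E] [Module ℝ E] {F C : Set E}
    (h : IsFaceOf F C) :
    ∃ ℓ : E →ₗ[ℝ] ℝ, (∀ x ∈ C, ℓ x ≤ 0) ∧ F = {x ∈ C | ℓ x = 0} := by
  rcases h with rfl | h
  · exact ⟨0, fun x _ => le_refl 0, by ext x; simp⟩
  · exact h

lemma twisted_slice {k n : ℕ} (Φ : (Fin k → ℝ) → (Fin n → ℝ))
    (σ : Set (Fin k → ℝ)) (τ : Set (Fin n → ℝ))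
    (f : (Fin k → ℝ) → ℝ) (g : (Fin n → ℝ) → ℝ)
    (hf : ∀ x ∈ σ, f x ≤ 0) (hg : ∀ y ∈ τ, g y ≤ 0) :
    twistedCone Φ {x ∈ σ | f x = 0} {y ∈ τ | g y = 0}
      = {p ∈ twistedCone Φ σ τ | f p.1 + g (p.2 - Φ p.1) = 0} := by
  ext p
  simp only [mem_twistedCone, Set.mem_setOf_eq]
  constructor
  · rintro ⟨⟨h1, h2⟩, h3, h4⟩
    exact ⟨⟨h1, h3⟩, by rw [h2, h4]; ring⟩
  · rintro ⟨⟨h1, h3⟩, h⟩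
    have hf' := hf _ h1
    have hg' := hg _ h3
    exact ⟨⟨h1, by linarith⟩, h3, by linarith⟩

lemma twistedCone_inter {k n : ℕ} (Φ : (Fin k → ℝ) → (Fin n → ℝ))
    (σ₁ σ₂ : Set (Fin k → ℝ)) (τ₁ τ₂ : Set (Fin n → ℝ)) :
    twistedCone Φ σ₁ τ₁ ∩ twistedCone Φ σ₂ τ₂ = twistedCone Φ (σ₁ ∩ σ₂) (τ₁ ∩ τ₂) := by
  ext p
  simp only [Set.mem_inter_iff, mem_twistedCone]
  tauto

lemma twisted_isFaceOf {k n : ℕ} (Φ : (Fin k → ℝ) → (Fin n → ℝ))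
    (σ : Set (Fin k → ℝ)) (τ : Set (Fin n → ℝ))
    (L : (Fin k → ℝ) →ₗ[ℝ] (Fin n → ℝ)) (hL : ∀ x ∈ σ, Φ x = L x)
    (ℓB : (Fin k → ℝ) →ₗ[ℝ] ℝ) (ℓF : (Fin n → ℝ) →ₗ[ℝ] ℝ)
    (hℓB : ∀ x ∈ σ, ℓB x ≤ 0) (hℓF : ∀ y ∈ τ, ℓF y ≤ 0) :
    IsFaceOf (twistedCone Φ {x ∈ σ | ℓB x = 0} {y ∈ τ | ℓF y = 0}) (twistedCone Φ σ τ) := by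
  right
  refine ⟨ℓB.comp (LinearMap.fst ℝ _ _)
    + ℓF.comp (LinearMap.snd ℝ _ _ - L.comp (LinearMap.fst ℝ _ _)), ?_, ?_⟩
  · intro p hp
    obtain ⟨h1, h2⟩ := (mem_twistedCone Φ σ τ p).1 hp
    have e : Φ p.1 = L p.1 := hL _ h1
    simp only [LinearMap.add_apply, LinearMap.coe_comp, Function.comp_apply,
      LinearMap.fst_apply, LinearMap.sub_apply, LinearMap.snd_apply]
    rw [← e]
    have := hℓB _ h1
    have := hℓF _ h2
    linarith
  · rw [twisted_slice Φ σ τ ℓB ℓF hℓB hℓF]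
    ext p
    simp only [Set.mem_setOf_eq, LinearMap.add_apply, LinearMap.coe_comp, Function.comp_apply,
      LinearMap.fst_apply, LinearMap.sub_apply, LinearMap.snd_apply]
    refine and_congr_right fun hp => ?_
    rw [hL _ ((mem_twistedCone Φ σ τ p).1 hp).1]

lemma face_of_twisted {k n : ℕ} (Φ : (Fin k → ℝ) → (Fin n → ℝ))
    (σ : Set (Fin k → ℝ)) (τ : Set (Fin n → ℝ))
    (L : (Fin k → ℝ) →ₗ[ℝ] (Fin n → ℝ)) (hL : ∀ x ∈ σ, Φ x = L x)
    (h0σ : (0 : Fin k → ℝ) ∈ σ) (h0τ : (0 : Fin n → ℝ) ∈ τ)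
    (G : Set ((Fin k → ℝ) × (Fin n → ℝ))) (hG : IsFaceOf G (twistedCone Φ σ τ)) :
    ∃ σ' τ', IsFaceOf σ' σ ∧ IsFaceOf τ' τ ∧ G = twistedCone Φ σ' τ' := by
  have hΦ0 : Φ 0 = 0 := by rw [hL 0 h0σ, map_zero]
  rcases hG with rfl | ⟨ℓ, hℓ, rfl⟩
  · exact ⟨σ, τ, Or.inl rfl, Or.inl rfl, rfl⟩
  · set ℓB := ℓ.comp (LinearMap.prod LinearMap.id L) with hℓBdef
    set ℓF := ℓ.comp (LinearMap.inr ℝ (Fin k → ℝ) (Fin n → ℝ)) with hℓFdef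
    have hmem1 : ∀ x ∈ σ, (x, Φ x) ∈ twistedCone Φ σ τ := fun x hx =>
      (mem_twistedCone Φ σ τ _).2 ⟨hx, by simpa using h0τ⟩
    have hmem2 : ∀ y ∈ τ, ((0 : Fin k → ℝ), y) ∈ twistedCone Φ σ τ := fun y hy =>
      (mem_twistedCone Φ σ τ _).2 ⟨h0σ, by simpa [hΦ0] using hy⟩
    have hℓB : ∀ x ∈ σ, ℓB x ≤ 0 := by
      intro x hx
      have h := hℓ _ (hmem1 x hx)
      simp only [hℓBdef, LinearMap.coe_comp, Function.comp_apply, LinearMap.prod_apply,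
        Function.prod, LinearMap.id_coe, id_eq]
      rw [← hL x hx]
      exact h
    have hℓF : ∀ y ∈ τ, ℓF y ≤ 0 := by
      intro y hy
      have h := hℓ _ (hmem2 y hy)
      simpa only [hℓFdef, LinearMap.coe_comp, Function.comp_apply, LinearMap.inr_apply] using h
    refine ⟨_, _, Or.inr ⟨ℓB, hℓB, rfl⟩, Or.inr ⟨ℓF, hℓF, rfl⟩, ?_⟩
    rw [twisted_slice Φ σ τ ℓB ℓF hℓB hℓF]
    ext p
    simp only [Set.mem_setOf_eq]
    refine and_congr_right fun hp => ?_
    obtain ⟨h1, h2⟩ := (mem_twistedCone Φ σ τ p).1 hp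
    have hdecomp : p = (p.1, Φ p.1) + ((0 : Fin k → ℝ), p.2 - Φ p.1) := by
      apply Prod.ext <;> simp
    have key : ℓ p = ℓB p.1 + ℓF (p.2 - Φ p.1) := by
      calc ℓ p = ℓ ((p.1, Φ p.1) + ((0 : Fin k → ℝ), p.2 - Φ p.1)) := by rw [← hdecomp]
        _ = ℓ (p.1, Φ p.1) + ℓ ((0 : Fin k → ℝ), p.2 - Φ p.1) := map_add ℓ _ _
        _ = ℓB p.1 + ℓF (p.2 - Φ p.1) := by
            simp only [hℓBdef, hℓFdef, LinearMap.coe_comp, Function.comp_apply,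
              LinearMap.prod_apply, Function.prod, LinearMap.id_coe, id_eq, LinearMap.inr_apply]
            rw [hL _ h1]
    rw [key]

lemma isPolyCone_twistedCone {k n : ℕ} (Φ : (Fin k → ℝ) → (Fin n → ℝ))
    (σ : Set (Fin k → ℝ)) (τ : Set (Fin n → ℝ))
    (L : (Fin k → ℝ) →ₗ[ℝ] (Fin n → ℝ)) (hL : ∀ x ∈ σ, Φ x = L x)
    (hσ : IsPolyCone σ) (hτ : IsPolyCone τ) : IsPolyCone (twistedCone Φ σ τ) := by
  obtain ⟨s, hs⟩ := hσ
  obtain ⟨t, ht⟩ := hτ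
  set R0 := {c : ℝ // 0 ≤ c}
  let f : (Fin k → ℝ) →ₗ[R0] ((Fin k → ℝ) × (Fin n → ℝ)) :=
    (LinearMap.prod LinearMap.id L).restrictScalars R0
  let g : (Fin n → ℝ) →ₗ[R0] ((Fin k → ℝ) × (Fin n → ℝ)) :=
    (LinearMap.inr ℝ (Fin k → ℝ) (Fin n → ℝ)).restrictScalars R0
  refine ⟨s.image (fun x => (x, L x)) ∪ t.image (fun y => ((0 : Fin k → ℝ), y)), ?_⟩
  have hgraph : graphOver Φ σ = f '' σ := by
    refine Set.image_congr fun x hx => ?_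
    simp [f, hL x hx]
  have hprod : ({0} : Set (Fin k → ℝ)) ×ˢ τ = g '' τ := by
    ext p
    constructor
    · rintro ⟨h1, h2⟩
      exact ⟨p.2, h2, by simp [g]; exact Prod.ext (by simpa using h1.symm) rfl⟩
    · rintro ⟨y, hy, rfl⟩
      exact ⟨rfl, by simpa [g] using hy⟩
  have h1 : f '' σ = ↑(Submodule.span R0 (f '' (s : Set (Fin k → ℝ)))) := by
    rw [hs, ← Submodule.map_coe, Submodule.map_span]
  have h2 : g '' τ = ↑(Submodule.span R0 (g '' (t : Set (Fin n → ℝ)))) := by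
    rw [ht, ← Submodule.map_coe, Submodule.map_span]
  rw [twistedCone, hgraph, hprod, h1, h2, ← Submodule.coe_sup, ← Submodule.span_union]
  congr 1
  simp only [Finset.coe_union, Finset.coe_image]
  congr 1 <;> apply Set.image_congr <;> intro x _ <;> simp [f, g]

lemma twisted_pointed {k n : ℕ} (Φ : (Fin k → ℝ) → (Fin n → ℝ))
    (σ : Set (Fin k → ℝ)) (τ : Set (Fin n → ℝ))
    (h0σ : (0 : Fin k → ℝ) ∈ σ) (h0τ : (0 : Fin n → ℝ) ∈ τ) (hΦ0 : Φ 0 = 0)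
    (hσp : σ ∩ (-σ) = {0}) (hτp : τ ∩ (-τ) = {0}) :
    twistedCone Φ σ τ ∩ (-(twistedCone Φ σ τ)) = {0} := by
  ext p
  simp only [Set.mem_inter_iff, Set.mem_neg, mem_twistedCone, Set.mem_singleton_iff]
  constructor
  · rintro ⟨⟨h1, h2⟩, h3, h4⟩
    have hx : p.1 = 0 := by
      have : p.1 ∈ σ ∩ (-σ) := ⟨h1, by simpa using h3⟩
      rw [hσp] at this
      exact this
    have hΦp : Φ p.1 = 0 := by rw [hx, hΦ0]
    have hy : p.2 = 0 := by
      have m1 : p.2 ∈ τ := by simpa [hΦp] using h2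
      have m2 : -p.2 ∈ τ := by
        have : (-p).2 - Φ ((-p).1) ∈ τ := h4
        simpa [hx, hΦ0] using this
      have : p.2 ∈ τ ∩ (-τ) := ⟨m1, by simpa using m2⟩
      rw [hτp] at this
      exact this
    exact Prod.ext hx hy
  · rintro rfl
    constructor
    · exact ⟨h0σ, by simpa [hΦ0] using h0τ⟩
    · refine ⟨by simpa using h0σ, ?_⟩
      simpa [hΦ0] using h0τ

/-- the twisted product of two fans along a piecewise linear map is a fan. -/
theorem stmt7 (k n : ℕ) (SB : Set (Set (Fin k → ℝ))) (hB : IsFan SB)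
    (SF : Set (Set (Fin n → ℝ))) (hF : IsFan SF)
    (Φ : (Fin k → ℝ) → (Fin n → ℝ)) (hΦ : IsPLOn Φ SB) :
    IsFan (twistedFan Φ SB SF) := by
  obtain ⟨hBfin, hBcone, hBface, hBint⟩ := hB
  obtain ⟨hFfin, hFcone, hFface, hFint⟩ := hF
  refine ⟨?_, ?_, ?_, ?_⟩
  · refine Set.Finite.subset ((hBfin.prod hFfin).image
      (fun q : Set (Fin k → ℝ) × Set (Fin n → ℝ) => twistedCone Φ q.1 q.2)) ?_
    rintro C ⟨σ, hσ, τ, hτ, rfl⟩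
    exact ⟨(σ, τ), ⟨hσ, hτ⟩, rfl⟩
  · rintro C ⟨σ, hσ, τ, hτ, rfl⟩
    obtain ⟨L, hL⟩ := hΦ.2 σ hσ
    have h0σ := (hBcone σ hσ).1.zero_mem'
    have h0τ := (hFcone τ hτ).1.zero_mem'
    have hΦ0 : Φ 0 = 0 := by rw [hL 0 h0σ, map_zero]
    exact ⟨isPolyCone_twistedCone Φ σ τ L hL (hBcone σ hσ).1 (hFcone τ hτ).1,
      twisted_pointed Φ σ τ h0σ h0τ hΦ0 (hBcone σ hσ).2 (hFcone τ hτ).2⟩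
  · rintro C ⟨σ, hσ, τ, hτ, rfl⟩ G hG
    obtain ⟨L, hL⟩ := hΦ.2 σ hσ
    have h0σ := (hBcone σ hσ).1.zero_mem'
    have h0τ := (hFcone τ hτ).1.zero_mem'
    obtain ⟨σ', τ', hσ', hτ', rfl⟩ := face_of_twisted Φ σ τ L hL h0σ h0τ G hG
    exact ⟨σ', hBface σ hσ σ' hσ', τ', hFface τ hτ τ' hτ', rfl⟩
  · rintro C ⟨σ₁, hσ₁, τ₁, hτ₁, rfl⟩ D ⟨σ₂, hσ₂, τ₂, hτ₂, rfl⟩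
    obtain ⟨L₁, hL₁⟩ := hΦ.2 σ₁ hσ₁
    obtain ⟨L₂, hL₂⟩ := hΦ.2 σ₂ hσ₂
    constructor
    · obtain ⟨ℓB, hℓB, hBeq⟩ := (hBint σ₁ hσ₁ σ₂ hσ₂).1.exists_rep
      obtain ⟨ℓF, hℓF, hFeq⟩ := (hFint τ₁ hτ₁ τ₂ hτ₂).1.exists_rep
      have heq : twistedCone Φ σ₁ τ₁ ∩ twistedCone Φ σ₂ τ₂
          = twistedCone Φ {x ∈ σ₁ | ℓB x = 0} {y ∈ τ₁ | ℓF y = 0} := by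
        rw [twistedCone_inter Φ σ₁ σ₂ τ₁ τ₂, ← hBeq, ← hFeq]
      rw [heq]
      exact twisted_isFaceOf Φ σ₁ τ₁ L₁ hL₁ ℓB ℓF hℓB hℓF
    · obtain ⟨ℓB, hℓB, hBeq⟩ := (hBint σ₁ hσ₁ σ₂ hσ₂).2.exists_rep
      obtain ⟨ℓF, hℓF, hFeq⟩ := (hFint τ₁ hτ₁ τ₂ hτ₂).2.exists_rep
      have heq : twistedCone Φ σ₁ τ₁ ∩ twistedCone Φ σ₂ τ₂
          = twistedCone Φ {x ∈ σ₂ | ℓB x = 0} {y ∈ τ₂ | ℓF y = 0} := by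
        rw [twistedCone_inter Φ σ₁ σ₂ τ₁ τ₂, ← hBeq, ← hFeq]
      rw [heq]
      exact twisted_isFaceOf Φ σ₂ τ₂ L₂ hL₂ ℓB ℓF hℓB hℓF
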